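/- Let G=(V,E) be a finite connected weighted graph, λ > 0, f : V → ℝ, and suppose A ∈ ℝ and a function s : V → ℝ satisfy: L_λ(s) < 0 pointwise, L_λ(A) > 0 pointwise (where L_λ(u) = −Δu + λe^u(e^u−1) + f), and s < A on V. If u minimizes the functional J_λ(u) = (1/2)∫_V|∇u|² dμ + (λ/2)∫_V(e^u − 1)² dμ + ∫_V fu dμ over the compact set {u : s ≤ u ≤ A}, then s < u < A strictly on V; consequently u is a local minimum critical point of J_λ and solves Δu = λe^u(e^u − 1) + f. -/

import Mathlib

open Real Finset Filter Topology

variable {V : Type*}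

/-- Graph Laplacian: Δu(x) = (1/μ x) Σ_y ω_{xy}(u(y) − u(x)); non-edges have weight 0. -/
noncomputable def glap [Fintype V] (μ : V → ℝ) (w : V → V → ℝ) (u : V → ℝ) (x : V) : ℝ :=
  (1 / μ x) * ∑ y, w x y * (u y - u x)

/-- Integral over the graph: ∫_V g dμ = Σ_x μ(x) g(x). -/
noncomputable def intg [Fintype V] (μ : V → ℝ) (g : V → ℝ) : ℝ := ∑ x, μ x * g x

/-- Dirichlet energy ∫_V |∇u|² dμ = (1/2) Σ_x Σ_y ω_{xy}(u(y) − u(x))². -/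
noncomputable def gradSq [Fintype V] (w : V → V → ℝ) (u : V → ℝ) : ℝ :=
  (1/2) * ∑ x, ∑ y, w x y * (u y - u x)^2

/-- Connectivity: any two vertices are joined by a finite chain of positive-weight edges. -/
def GConn (w : V → V → ℝ) : Prop :=
  ∀ x y : V, Relation.ReflTransGen (fun a b => 0 < w a b) x y

/-- Sup norm ‖u‖_∞. -/
noncomputable def supnorm [Fintype V] (u : V → ℝ) : ℝ := ⨆ x, |u x|

/-- The truncated minimizer stays strictly between the sub-solution s and the
super-solution A, is a local minimum of J_λ, and solves the equation. -/

lemma right_deriv_nonneg {φ : ℝ → ℝ} {D : ℝ} (h : HasDerivAt φ D 0)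
    (c : ℝ) (hc : 0 < c) (hm : ∀ t ∈ Set.Ioo (0:ℝ) c, φ 0 ≤ φ t) : 0 ≤ D := by
  rw [hasDerivAt_iff_tendsto_slope] at h
  have h' : Tendsto (slope φ 0) (nhdsWithin 0 (Set.Ioi 0)) (nhds D) :=
    h.mono_left (nhdsWithin_mono _ (fun t ht => ne_of_gt ht))
  refine ge_of_tendsto h' ?_
  filter_upwards [Ioo_mem_nhdsGT_of_mem (Set.mem_Ico.mpr ⟨le_refl (0:ℝ), hc⟩)] with t ht
  rw [slope_def_field]
  have := hm t ht
  have ht0 : (0:ℝ) < t := ht.1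
  apply div_nonneg <;> linarith

lemma left_deriv_nonpos {φ : ℝ → ℝ} {D : ℝ} (h : HasDerivAt φ D 0)
    (c : ℝ) (hc : 0 < c) (hm : ∀ t ∈ Set.Ioo (-c) (0:ℝ), φ 0 ≤ φ t) : D ≤ 0 := by
  rw [hasDerivAt_iff_tendsto_slope] at h
  have h' : Tendsto (slope φ 0) (nhdsWithin 0 (Set.Iio 0)) (nhds D) :=
    h.mono_left (nhdsWithin_mono _ (fun t ht => ne_of_lt ht))
  refine le_of_tendsto h' ?_
  filter_upwards [Ioo_mem_nhdsLT_of_mem (Set.mem_Ioc.mpr ⟨neg_lt_zero.mpr hc, le_refl (0:ℝ)⟩)] with t ht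
  rw [slope_def_field]
  have := hm t ht
  have ht0 : t < 0 := ht.2
  apply div_nonpos_of_nonneg_of_nonpos <;> linarith

lemma hasDeriv_J [Fintype V] [DecidableEq V] (μ : V → ℝ) (w : V → V → ℝ)
    (hμ : ∀ x, 0 < μ x) (hsymm : ∀ x y, w x y = w y x)
    (l : ℝ) (f : V → ℝ) (u : V → ℝ) (x₀ : V) :
    HasDerivAt (fun t : ℝ =>
      (1/2) * gradSq w (fun y => u y + if y = x₀ then t else 0)
      + (l/2) * intg μ (fun x => (Real.exp (u x + if x = x₀ then t else 0) - 1)^2)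
      + intg μ (fun x => f x * (u x + if x = x₀ then t else 0)))
    (μ x₀ * (-glap μ w u x₀ + l * Real.exp (u x₀) * (Real.exp (u x₀) - 1) + f x₀)) 0 := by
  have h21 : (2:ℕ) - 1 = 1 := rfl
  have hb : ∀ y : V, HasDerivAt (fun t : ℝ => u y + if y = x₀ then t else 0)
      (if y = x₀ then (1:ℝ) else 0) 0 := by
    intro y
    by_cases h : y = x₀
    · simp only [h, if_true]
      simpa using (hasDerivAt_id (0:ℝ)).const_add (u x₀)
    · simp only [h, if_false]
      exact hasDerivAt_const (0:ℝ) (u y + 0)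
  have hμ0 : μ x₀ ≠ 0 := ne_of_gt (hμ x₀)
  -- piece 1
  have h1core : HasDerivAt (fun t : ℝ => ∑ a : V, ∑ b : V,
        w a b * ((u b + if b = x₀ then t else 0) - (u a + if a = x₀ then t else 0))^2)
      (∑ a : V, ∑ b : V, w a b * ((2:ℕ) *
        ((u b + if b = x₀ then (0:ℝ) else 0) - (u a + if a = x₀ then (0:ℝ) else 0)) ^ (2-1) *
        ((if b = x₀ then (1:ℝ) else 0) - (if a = x₀ then (1:ℝ) else 0)))) 0 := by
    refine HasDerivAt.fun_sum fun a _ => HasDerivAt.fun_sum fun b _ => HasDerivAt.const_mul _ ?_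
    exact ((hb b).sub (hb a)).pow 2
  have h1 : HasDerivAt (fun t : ℝ => (1/2) * gradSq w (fun y => u y + if y = x₀ then t else 0))
      (μ x₀ * (-glap μ w u x₀)) 0 := by
    have H := (h1core.const_mul ((1:ℝ)/2)).const_mul ((1:ℝ)/2)
    simp only [gradSq]
    refine H.congr_deriv (Eq.symm ?_)
    simp only [ite_self, add_zero, h21, pow_one, Nat.cast_ofNat]
    have expand : ∀ a b : V, w a b * (2 * (u b - u a) *
        ((if b = x₀ then (1:ℝ) else 0) - (if a = x₀ then (1:ℝ) else 0)))
        = (if b = x₀ then 2 * (w a b * (u b - u a)) else 0)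
          - (if a = x₀ then 2 * (w a b * (u b - u a)) else 0) := by
      intro a b
      by_cases h1 : b = x₀ <;> by_cases h2 : a = x₀ <;> simp [h1, h2] <;> ring
    have e1 : ∀ a : V, ∑ b : V, (if b = x₀ then 2 * (w a b * (u b - u a)) else 0)
        = 2 * (w a x₀ * (u x₀ - u a)) := fun a => by simp
    have e2 : ∀ a : V, ∑ b : V, (if a = x₀ then 2 * (w a b * (u b - u a)) else 0)
        = if a = x₀ then ∑ b : V, 2 * (w a b * (u b - u a)) else 0 := by
      intro a; split <;> simp
    calc μ x₀ * (-glap μ w u x₀) = -∑ y, w x₀ y * (u y - u x₀) := by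
          rw [glap, mul_neg, ← mul_assoc, mul_one_div, div_self hμ0, one_mul]
      _ = (1/2) * ((1/2) * ∑ a : V, ∑ b : V, w a b * (2 * (u b - u a) *
            ((if b = x₀ then (1:ℝ) else 0) - (if a = x₀ then (1:ℝ) else 0)))) := by
          simp only [expand, Finset.sum_sub_distrib, e1, e2]
          rw [Finset.sum_ite_eq' Finset.univ x₀]
          simp only [Finset.mem_univ, if_true]
          have hx : ∑ a : V, 2 * (w a x₀ * (u x₀ - u a))
              = -∑ a : V, 2 * (w x₀ a * (u a - u x₀)) := by
            rw [← Finset.sum_neg_distrib]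
            exact Finset.sum_congr rfl fun a _ => by rw [hsymm a x₀]; ring
          rw [hx]
          have hy : ∀ c : V → ℝ, ∑ a : V, 2 * (w x₀ a * (c a - c x₀))
              = 2 * ∑ a : V, w x₀ a * (c a - c x₀) := fun c => by rw [Finset.mul_sum]
          rw [hy u]
          ring
  -- piece 2
  have h2core : HasDerivAt (fun t : ℝ => ∑ x : V, μ x *
        (Real.exp (u x + if x = x₀ then t else 0) - 1)^2)
      (∑ x : V, μ x * ((2:ℕ) * (Real.exp (u x + if x = x₀ then (0:ℝ) else 0) - 1) ^ (2-1) *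
        (Real.exp (u x + if x = x₀ then (0:ℝ) else 0) * (if x = x₀ then (1:ℝ) else 0)))) 0 := by
    refine HasDerivAt.fun_sum fun x _ => HasDerivAt.const_mul _ ?_
    exact ((hb x).exp.sub_const 1).pow 2
  have h2 : HasDerivAt (fun t : ℝ => (l/2) * intg μ
        (fun x => (Real.exp (u x + if x = x₀ then t else 0) - 1)^2))
      (μ x₀ * (l * Real.exp (u x₀) * (Real.exp (u x₀) - 1))) 0 := by
    have H := h2core.const_mul (l/2)
    simp only [intg]
    refine H.congr_deriv (Eq.symm ?_)
    simp only [ite_self, add_zero, h21, pow_one, Nat.cast_ofNat]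
    have e3 : ∀ x : V, μ x * (2 * (Real.exp (u x) - 1) *
        (Real.exp (u x) * (if x = x₀ then (1:ℝ) else 0)))
        = if x = x₀ then μ x * (2 * (Real.exp (u x) - 1) * Real.exp (u x)) else 0 := by
      intro x; split <;> simp <;> ring
    simp only [e3]
    rw [Finset.sum_ite_eq' Finset.univ x₀]
    simp only [Finset.mem_univ, if_true]
    ring
  -- piece 3
  have h3 : HasDerivAt (fun t : ℝ => intg μ (fun x => f x * (u x + if x = x₀ then t else 0)))
      (μ x₀ * f x₀) 0 := by
    have H : HasDerivAt (fun t : ℝ => ∑ x : V, μ x * (f x * (u x + if x = x₀ then t else 0)))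
        (∑ x : V, μ x * (f x * (if x = x₀ then (1:ℝ) else 0))) 0 := by
      refine HasDerivAt.fun_sum fun x _ => HasDerivAt.const_mul _ ?_
      exact (hb x).const_mul (f x)
    simp only [intg]
    convert H using 1
    have e4 : ∀ x : V, μ x * (f x * (if x = x₀ then (1:ℝ) else 0))
        = if x = x₀ then μ x * f x else 0 := by
      intro x; split <;> simp
    simp only [e4]
    rw [Finset.sum_ite_eq' Finset.univ x₀]
    simp
  have hT := (h1.add h2).add h3
  refine hT.congr_deriv (Eq.symm ?_)
  ring

/-- One-sided sign conditions on the Euler–Lagrange expression at a constrained minimizer. -/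
lemma deriv_sign [Fintype V] [DecidableEq V] (μ : V → ℝ) (w : V → V → ℝ)
    (hμ : ∀ x, 0 < μ x) (hsymm : ∀ x y, w x y = w y x)
    (l : ℝ) (f : V → ℝ) (A : ℝ) (s : V → ℝ) (u : V → ℝ)
    (hu : ∀ x, s x ≤ u x ∧ u x ≤ A)
    (hmin : ∀ v : V → ℝ, (∀ x, s x ≤ v x ∧ v x ≤ A) →
      (1/2) * gradSq w u + (l/2) * intg μ (fun x => (Real.exp (u x) - 1)^2)
        + intg μ (fun x => f x * u x)
      ≤ (1/2) * gradSq w v + (l/2) * intg μ (fun x => (Real.exp (v x) - 1)^2)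
        + intg μ (fun x => f x * v x)) (x₀ : V) :
    (u x₀ < A → 0 ≤ μ x₀ * (-glap μ w u x₀
        + l * Real.exp (u x₀) * (Real.exp (u x₀) - 1) + f x₀)) ∧
    (s x₀ < u x₀ → μ x₀ * (-glap μ w u x₀
        + l * Real.exp (u x₀) * (Real.exp (u x₀) - 1) + f x₀) ≤ 0) := by
  have hd := hasDeriv_J μ w hμ hsymm l f u x₀
  have hstep : ∀ t : ℝ,
      (∀ x : V, s x ≤ u x + (if x = x₀ then t else 0) ∧ u x + (if x = x₀ then t else 0) ≤ A) →
      ((1/2) * gradSq w (fun y => u y + if y = x₀ then (0:ℝ) else 0)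
        + (l/2) * intg μ (fun x => (Real.exp (u x + if x = x₀ then (0:ℝ) else 0) - 1)^2)
        + intg μ (fun x => f x * (u x + if x = x₀ then (0:ℝ) else 0)))
      ≤ ((1/2) * gradSq w (fun y => u y + if y = x₀ then t else 0)
        + (l/2) * intg μ (fun x => (Real.exp (u x + if x = x₀ then t else 0) - 1)^2)
        + intg μ (fun x => f x * (u x + if x = x₀ then t else 0))) := by
    intro t hv
    have h := hmin (fun y => u y + if y = x₀ then t else 0) hv
    simp only [ite_self, add_zero]
    exact h
  constructor
  · intro hlt
    refine right_deriv_nonneg hd (A - u x₀) (by linarith) (fun t ht => ?_)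
    refine hstep t (fun x => ?_)
    by_cases h : x = x₀
    · subst h
      rw [if_pos rfl]
      exact ⟨by linarith [(hu x).1, ht.1], by linarith [ht.2]⟩
    · simp only [if_neg h, add_zero]
      exact hu x
  · intro hgt
    refine left_deriv_nonpos hd (u x₀ - s x₀) (by linarith) (fun t ht => ?_)
    refine hstep t (fun x => ?_)
    by_cases h : x = x₀
    · subst h
      rw [if_pos rfl]
      exact ⟨by linarith [ht.1], by linarith [(hu x).2, ht.2]⟩
    · simp only [if_neg h, add_zero]
      exact hu x

theorem stmt17 [Fintype V] [Nonempty V] (μ : V → ℝ) (w : V → V → ℝ)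
    (hμ : ∀ x, 0 < μ x) (hsymm : ∀ x y, w x y = w y x) (hnn : ∀ x y, 0 ≤ w x y)
    (hconn : GConn w) (l : ℝ) (hlpos : 0 < l) (f : V → ℝ) (A : ℝ) (s : V → ℝ)
    (hsub : ∀ x, -glap μ w s x + l * Real.exp (s x) * (Real.exp (s x) - 1) + f x < 0)
    (hsup : ∀ x, 0 < -glap μ w (fun _ => A) x
        + l * Real.exp A * (Real.exp A - 1) + f x)
    (hsA : ∀ x, s x < A) (u : V → ℝ)
    (hu : ∀ x, s x ≤ u x ∧ u x ≤ A)
    (hmin : ∀ v : V → ℝ, (∀ x, s x ≤ v x ∧ v x ≤ A) →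
      (1/2) * gradSq w u + (l/2) * intg μ (fun x => (Real.exp (u x) - 1)^2)
        + intg μ (fun x => f x * u x)
      ≤ (1/2) * gradSq w v + (l/2) * intg μ (fun x => (Real.exp (v x) - 1)^2)
        + intg μ (fun x => f x * v x)) :
    (∀ x, s x < u x ∧ u x < A) ∧
    (∃ ε : ℝ, 0 < ε ∧ ∀ v : V → ℝ, (∀ x, |v x - u x| < ε) →
      (1/2) * gradSq w u + (l/2) * intg μ (fun x => (Real.exp (u x) - 1)^2)
        + intg μ (fun x => f x * u x)
      ≤ (1/2) * gradSq w v + (l/2) * intg μ (fun x => (Real.exp (v x) - 1)^2)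
        + intg μ (fun x => f x * v x)) ∧
    (∀ x, glap μ w u x = l * Real.exp (u x) * (Real.exp (u x) - 1) + f x) := by

  classical
  have hds := fun x₀ => deriv_sign μ w hμ hsymm l f A s u hu hmin x₀
  -- glap of the constant A is 0
  have hglapA : ∀ x, glap μ w (fun _ => A) x = 0 := by
    intro x; simp [glap]
  -- strict upper bound
  have hltA : ∀ x₀, u x₀ < A := by
    intro x₀
    rcases lt_or_eq_of_le (hu x₀).2 with h | h
    · exact h
    · exfalso
      -- at a touching point, perturbing downward gives D ≤ 0
      have hD := (hds x₀).2 (h ▸ hsA x₀)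
      have hμp := hμ x₀
      have hL : -glap μ w u x₀ + l * Real.exp (u x₀) * (Real.exp (u x₀) - 1) + f x₀ ≤ 0 := by
        nlinarith
      -- but glap u x₀ ≤ 0 since u ≤ A = u x₀
      have hg : glap μ w u x₀ ≤ 0 := by
        rw [glap]
        apply mul_nonpos_of_nonneg_of_nonpos
        · positivity
        · apply Finset.sum_nonpos
          intro y _
          apply mul_nonpos_of_nonneg_of_nonpos (hnn x₀ y)
          have := (hu y).2
          rw [h]; linarith
      have := hsup x₀
      rw [hglapA x₀] at this
      rw [h] at hL
      linarith
  -- strict lower bound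
  have hgts : ∀ x₀, s x₀ < u x₀ := by
    intro x₀
    rcases lt_or_eq_of_le (hu x₀).1 with h | h
    · exact h
    · exfalso
      have hD := (hds x₀).1 (h ▸ hsA x₀)
      have hμp := hμ x₀
      have hL : 0 ≤ -glap μ w u x₀ + l * Real.exp (u x₀) * (Real.exp (u x₀) - 1) + f x₀ := by
        nlinarith
      -- glap u x₀ ≥ glap s x₀ since u ≥ s and u x₀ = s x₀
      have hg : glap μ w s x₀ ≤ glap μ w u x₀ := by
        rw [glap, glap]
        apply mul_le_mul_of_nonneg_left _ (by positivity)
        apply Finset.sum_le_sum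
        intro y _
        apply mul_le_mul_of_nonneg_left _ (hnn x₀ y)
        have := (hu y).1
        rw [← h]; linarith
      have := hsub x₀
      rw [← h] at hL
      linarith
  refine ⟨fun x => ⟨hgts x, hltA x⟩, ?_, ?_⟩
  · -- local minimum
    set ε := Finset.univ.inf' Finset.univ_nonempty (fun x => min (u x - s x) (A - u x)) with hε
    have hεpos : 0 < ε := by
      rw [hε, Finset.lt_inf'_iff]
      intro x _
      have h1 := hgts x
      have h2 := hltA x
      simp only [lt_min_iff]
      constructor <;> linarith
    refine ⟨ε, hεpos, fun v hv => hmin v (fun x => ?_)⟩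
    have h1 : ε ≤ min (u x - s x) (A - u x) := Finset.inf'_le _ (Finset.mem_univ x)
    rw [le_min_iff] at h1
    have h2 := abs_lt.mp (hv x)
    constructor <;> linarith [h1.1, h1.2, h2.1, h2.2]
  · -- Euler-Lagrange equation
    intro x₀
    have hD1 := (hds x₀).1 (hltA x₀)
    have hD2 := (hds x₀).2 (hgts x₀)
    have hμp := hμ x₀
    have hL : -glap μ w u x₀ + l * Real.exp (u x₀) * (Real.exp (u x₀) - 1) + f x₀ = 0 := by
      have h0 : μ x₀ * (-glap μ w u x₀
          + l * Real.exp (u x₀) * (Real.exp (u x₀) - 1) + f x₀) = 0 := le_antisymm hD2 hD1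
      exact (mul_eq_zero.mp h0).resolve_left (ne_of_gt hμp)
    linarith
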